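/- Let Γ ⊆ ℝ be an additive subgroup with Γ/pΓ infinite (for a prime p). Then there exists a sequence (r_i)_{i∈ℕ} of elements of Γ, pairwise inequivalent modulo pΓ, with r_i ∈ (−1, 1) for all i. -/

import Mathlib

/-- The subgroup `pΓ = {p·γ : γ ∈ Γ}` of `ℝ`. -/
def pMulSubgroup (p : ℕ) (Γ : AddSubgroup ℝ) : AddSubgroup ℝ :=
  Γ.map (AddMonoidHom.mulLeft (p : ℝ))

/-- If `Γ/pΓ` is infinite, there is a sequence of elements of `Γ` in `(-1, 1)` lying
in pairwise distinct cosets of `pΓ`. -/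
theorem exists_bounded_coset_reps (p : ℕ) (hp : p.Prime) (Γ : AddSubgroup ℝ)
    (hinf : Infinite (Γ ⧸ (pMulSubgroup p Γ).addSubgroupOf Γ)) :
    ∃ r : ℕ → Γ,
      (Function.Injective fun i =>
        (QuotientAddGroup.mk (r i) : Γ ⧸ (pMulSubgroup p Γ).addSubgroupOf Γ)) ∧
      ∀ i, (r i : ℝ) ∈ Set.Ioo (-1 : ℝ) 1 := by
  have hp0 : (0 : ℝ) < (p : ℝ) := by exact_mod_cast hp.pos
  have hle : pMulSubgroup p Γ ≤ Γ := by
    rintro x ⟨γ, hγ, rfl⟩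
    simpa [AddMonoidHom.mulLeft, nsmul_eq_mul] using Γ.nsmul_mem hγ p
  -- Γ is dense
  have hdense : Dense (Γ : Set ℝ) := by
    rcases AddSubgroup.dense_or_cyclic Γ with h | ⟨a, ha⟩
    · exact h
    · exfalso
      -- cyclic case: quotient is finite
      have haΓ : a ∈ Γ := ha ▸ AddSubgroup.mem_closure_singleton.2 ⟨1, one_zsmul a⟩
      set H := (pMulSubgroup p Γ).addSubgroupOf Γ
      set g : Γ := ⟨a, haΓ⟩
      have hpg : (p : ℤ) • (QuotientAddGroup.mk g : Γ ⧸ H) = 0 := by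
        rw [← QuotientAddGroup.mk_zsmul, QuotientAddGroup.eq_zero_iff]
        show ((((p : ℤ) • g : Γ)) : ℝ) ∈ pMulSubgroup p Γ
        refine ⟨a, haΓ, ?_⟩
        show (p : ℝ) * a = (((p : ℤ) • g : Γ) : ℝ)
        push_cast [zsmul_eq_mul]
        ring
      have hsurj : Function.Surjective
          (fun k : Fin p => ((k : ℕ) • (QuotientAddGroup.mk g : Γ ⧸ H))) := by
        intro q
        obtain ⟨x, rfl⟩ := QuotientAddGroup.mk_surjective q
        have hmem : (x : ℝ) ∈ AddSubgroup.closure ({a} : Set ℝ) := by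
          rw [← ha]; exact x.2
        obtain ⟨n, hn⟩ := AddSubgroup.mem_closure_singleton.1 hmem
        have hx : x = n • g := Subtype.ext (by simp [g, hn])
        have hmod : 0 ≤ n % p ∧ n % p < p :=
          ⟨Int.emod_nonneg n (by exact_mod_cast hp.ne_zero),
           Int.emod_lt_of_pos n (by exact_mod_cast hp.pos)⟩
        refine ⟨⟨(n % p).toNat, by omega⟩, ?_⟩
        show ((n % (p : ℤ)).toNat • (QuotientAddGroup.mk g : Γ ⧸ H)) = QuotientAddGroup.mk x
        have h1 : (QuotientAddGroup.mk x : Γ ⧸ H) = n • QuotientAddGroup.mk g := by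
          rw [hx, QuotientAddGroup.mk_zsmul]
        have h2 : ((n % p).toNat : ℤ) • (QuotientAddGroup.mk g : Γ ⧸ H)
            = n • QuotientAddGroup.mk g := by
          conv_rhs => rw [← Int.emod_add_mul_ediv n p]
          rw [add_zsmul, mul_comm, mul_zsmul, hpg, smul_zero, add_zero,
            Int.toNat_of_nonneg hmod.1]
        rw [h1, ← h2, natCast_zsmul]
      have : Finite (Γ ⧸ H) := Finite.of_surjective _ hsurj
      exact this.not_infinite hinf
  -- pΓ is "dense enough"
  have key : ∀ x : ℝ, ∃ d ∈ pMulSubgroup p Γ, d ∈ Set.Ioo (x - 1) (x + 1) := by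
    intro x
    have hlt : (x - 1) / p < (x + 1) / p := by
      apply div_lt_div_of_pos_right _ hp0
      linarith
    obtain ⟨γ, hγ, h1, h2⟩ := hdense.exists_between hlt
    refine ⟨p * γ, ⟨γ, hγ, rfl⟩, ?_, ?_⟩
    · rw [← div_lt_iff₀' hp0]; exact h1
    · rw [← lt_div_iff₀' hp0]; exact h2
  set H := (pMulSubgroup p Γ).addSubgroupOf Γ
  obtain e := Infinite.natEmbedding (Γ ⧸ H)
  choose x hx using fun i => QuotientAddGroup.mk_surjective (e i)
  choose d hd hd2 using fun i => key (x i)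
  refine ⟨fun i => x i - ⟨d i, hle (hd i)⟩, ?_, ?_⟩
  · have heq : (fun i => (QuotientAddGroup.mk (x i - ⟨d i, hle (hd i)⟩) : Γ ⧸ H))
        = fun i => e i := by
      funext i
      rw [← hx i]
      refine (QuotientAddGroup.eq ..).2 ?_
      show ((-(x i - ⟨d i, hle (hd i)⟩) + x i : Γ) : ℝ) ∈ pMulSubgroup p Γ
      push_cast
      simpa using hd i
    rw [heq]
    exact fun a b h => e.injective h
  · intro i
    obtain ⟨h1, h2⟩ := hd2 i
    simp only [AddSubgroup.coe_sub, Set.mem_Ioo]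
    constructor <;> linarith
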